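/- Under the assumptions of the main theorem with μτ_λ<∞ for all λ∈ℝ, let τ(α) denote the optimal solution of minimizing ν∫_0^τ ξ(s)ds subject to τ∈[0,T] μ-a.s. and μτ=α. Then the value function f(α) = ν∫_0^{τ(α)}ξ(s)ds is convex on [0,μT]∩[0,∞). -/

import Mathlib

open Set MeasureTheory
open scoped ENNReal

/-- The (possibly infinite) value `ν ∫_0^{τ(x)} ξ(x,s) ds`, as an extended real. -/
noncomputable def clearingObjective {X : Type*} [MeasurableSpace X] (ν : Measure X)
    (ξ : X → ℝ → ℝ) (τ : X → ℝ≥0∞) : EReal :=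
  ((∫⁻ x, (∫⁻ s in {s : ℝ | 0 ≤ s ∧ ENNReal.ofReal s < τ x},
      ENNReal.ofReal (ξ x s)) ∂ν : ℝ≥0∞) : EReal) -
  ((∫⁻ x, (∫⁻ s in {s : ℝ | 0 ≤ s ∧ ENNReal.ofReal s < τ x},
      ENNReal.ofReal (-(ξ x s))) ∂ν : ℝ≥0∞) : EReal)

set_option linter.unusedVariables false
set_option linter.unusedSectionVars false

namespace Stmt8Aux

lemma key (g : ℝ → ℝ) (hg : MonotoneOn g (Ici 0)) {ta tb u : ℝ}
    (h0 : 0 ≤ ta) (hab : ta ≤ tb) (hu0 : 0 ≤ u) (hu1 : u ≤ 1) :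
    (∫⁻ s in Ico 0 ((1-u)*ta+u*tb), ENNReal.ofReal (g s))
      + ENNReal.ofReal (1-u) * (∫⁻ s in Ico 0 ta, ENNReal.ofReal (-(g s)))
      + ENNReal.ofReal u * (∫⁻ s in Ico 0 tb, ENNReal.ofReal (-(g s)))
    ≤ ENNReal.ofReal (1-u) * (∫⁻ s in Ico 0 ta, ENNReal.ofReal (g s))
      + ENNReal.ofReal u * (∫⁻ s in Ico 0 tb, ENNReal.ofReal (g s))
      + ∫⁻ s in Ico 0 ((1-u)*ta+u*tb), ENNReal.ofReal (-(g s)) := by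
  set tc : ℝ := (1-u)*ta + u*tb with htc
  have hac : ta ≤ tc := by nlinarith
  have hcb : tc ≤ tb := by nlinarith
  have h0c : 0 ≤ tc := le_trans h0 hac
  have split : ∀ (f : ℝ → ℝ≥0∞) (r r' : ℝ), 0 ≤ r → r ≤ r' →
      (∫⁻ s in Ico 0 r', f s) = (∫⁻ s in Ico 0 r, f s) + ∫⁻ s in Ico r r', f s := by
    intro f r r' h0r h
    rw [← Ico_union_Ico_eq_Ico h0r h,
      lintegral_union measurableSet_Ico Ico_disjoint_Ico_same]
  set v := ENNReal.ofReal (1-u) with hv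
  set w := ENNReal.ofReal u with hw
  have hvw : v + w = 1 := by
    rw [hv, hw, ← ENNReal.ofReal_add (by linarith) hu0]
    norm_num
  set Pa := ∫⁻ s in Ico 0 ta, ENNReal.ofReal (g s) with hPa
  set Na := ∫⁻ s in Ico 0 ta, ENNReal.ofReal (-(g s)) with hNa
  set P1 := ∫⁻ s in Ico ta tc, ENNReal.ofReal (g s) with hP1
  set N1 := ∫⁻ s in Ico ta tc, ENNReal.ofReal (-(g s)) with hN1
  set P2 := ∫⁻ s in Ico tc tb, ENNReal.ofReal (g s) with hP2
  set N2 := ∫⁻ s in Ico tc tb, ENNReal.ofReal (-(g s)) with hN2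
  have hsplitb : ∀ f : ℝ → ℝ≥0∞, (∫⁻ s in Ico ta tb, f s) =
      (∫⁻ s in Ico ta tc, f s) + ∫⁻ s in Ico tc tb, f s := by
    intro f
    rw [← Ico_union_Ico_eq_Ico hac hcb,
      lintegral_union measurableSet_Ico Ico_disjoint_Ico_same]
  have ePc : (∫⁻ s in Ico 0 tc, ENNReal.ofReal (g s)) = Pa + P1 :=
    split _ ta tc h0 hac
  have eNc : (∫⁻ s in Ico 0 tc, ENNReal.ofReal (-(g s))) = Na + N1 :=
    split _ ta tc h0 hac
  have ePb : (∫⁻ s in Ico 0 tb, ENNReal.ofReal (g s)) = Pa + (P1 + P2) := by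
    rw [split _ ta tb h0 hab, hsplitb]
  have eNb : (∫⁻ s in Ico 0 tb, ENNReal.ofReal (-(g s))) = Na + (N1 + N2) := by
    rw [split _ ta tb h0 hab, hsplitb]
  rw [ePc, eNc, ePb, eNb]
  -- core inequality
  have hmem : tc ∈ Ici (0:ℝ) := h0c
  have h1 : v * P1 + w * N2 ≤ w * P2 + v * N1 := by
    set m := g tc with hm
    set d := ENNReal.ofReal (tb - ta) with hd
    have hca : ENNReal.ofReal (tc - ta) = w * d := by
      rw [hw, hd, ← ENNReal.ofReal_mul hu0]
      congr 1; rw [htc]; ring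
    have hbc : ENNReal.ofReal (tb - tc) = v * d := by
      rw [hv, hd, ← ENNReal.ofReal_mul (by linarith)]
      congr 1; rw [htc]; ring
    have hP1le : P1 ≤ ENNReal.ofReal m * (w * d) := by
      calc P1 ≤ ∫⁻ _ in Ico ta tc, ENNReal.ofReal m := by
            apply setLIntegral_mono' measurableSet_Ico
            intro s hs
            exact ENNReal.ofReal_le_ofReal
              (hg (le_trans h0 hs.1) hmem (le_of_lt hs.2))
        _ = ENNReal.ofReal m * (w * d) := by
            rw [setLIntegral_const, Real.volume_Ico, hca]
    have hN2le : N2 ≤ ENNReal.ofReal (-m) * (v * d) := by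
      calc N2 ≤ ∫⁻ _ in Ico tc tb, ENNReal.ofReal (-m) := by
            apply setLIntegral_mono' measurableSet_Ico
            intro s hs
            exact ENNReal.ofReal_le_ofReal
              (neg_le_neg (hg hmem (le_trans h0c hs.1) hs.1))
        _ = ENNReal.ofReal (-m) * (v * d) := by
            rw [setLIntegral_const, Real.volume_Ico, hbc]
    have hP2ge : ENNReal.ofReal m * (v * d) ≤ P2 := by
      calc ENNReal.ofReal m * (v * d)
          = ∫⁻ _ in Ico tc tb, ENNReal.ofReal m := by
            rw [setLIntegral_const, Real.volume_Ico, hbc]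
        _ ≤ P2 := by
            apply setLIntegral_mono' measurableSet_Ico
            intro s hs
            exact ENNReal.ofReal_le_ofReal (hg hmem (le_trans h0c hs.1) hs.1)
    have hN1ge : ENNReal.ofReal (-m) * (w * d) ≤ N1 := by
      calc ENNReal.ofReal (-m) * (w * d)
          = ∫⁻ _ in Ico ta tc, ENNReal.ofReal (-m) := by
            rw [setLIntegral_const, Real.volume_Ico, hca]
        _ ≤ N1 := by
            apply setLIntegral_mono' measurableSet_Ico
            intro s hs
            exact ENNReal.ofReal_le_ofReal
              (neg_le_neg (hg (le_trans h0 hs.1) hmem (le_of_lt hs.2)))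
    calc v * P1 + w * N2
        ≤ v * (ENNReal.ofReal m * (w * d)) + w * (ENNReal.ofReal (-m) * (v * d)) :=
          add_le_add (mul_le_mul_right hP1le v) (mul_le_mul_right hN2le w)
      _ = w * (ENNReal.ofReal m * (v * d)) + v * (ENNReal.ofReal (-m) * (w * d)) := by
          ring
      _ ≤ w * P2 + v * N1 :=
          add_le_add (mul_le_mul_right hP2ge w) (mul_le_mul_right hN1ge v)
  -- algebra to conclude
  rw [show Pa + P1 + v * Na + w * (Na + (N1 + N2)) =
      1*Pa + 1*P1 + v * Na + w * (Na + (N1 + N2)) by ring,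
    show v * Pa + w * (Pa + (P1 + P2)) + (Na + N1) =
      v * Pa + w * (Pa + (P1 + P2)) + (1*Na + 1*N1) by ring,
    ← hvw]
  calc (v+w)*Pa + (v+w)*P1 + v * Na + w * (Na + (N1 + N2))
      = (v*Pa + w*Pa + w*P1 + v*Na + w*Na + w*N1) + (v*P1 + w*N2) := by ring
    _ ≤ (v*Pa + w*Pa + w*P1 + v*Na + w*Na + w*N1) + (w*P2 + v*N1) :=
        add_le_add_right h1 _
    _ = v * Pa + w * (Pa + (P1 + P2)) + ((v+w)*Na + (v+w)*N1) := by ring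


lemma keyU (g : ℝ → ℝ) (hg : MonotoneOn g (Ici 0)) {ta tb u : ℝ}
    (h0a : 0 ≤ ta) (h0b : 0 ≤ tb) (hu0 : 0 ≤ u) (hu1 : u ≤ 1) :
    (∫⁻ s in Ico 0 ((1-u)*ta+u*tb), ENNReal.ofReal (g s))
      + ENNReal.ofReal (1-u) * (∫⁻ s in Ico 0 ta, ENNReal.ofReal (-(g s)))
      + ENNReal.ofReal u * (∫⁻ s in Ico 0 tb, ENNReal.ofReal (-(g s)))
    ≤ ENNReal.ofReal (1-u) * (∫⁻ s in Ico 0 ta, ENNReal.ofReal (g s))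
      + ENNReal.ofReal u * (∫⁻ s in Ico 0 tb, ENNReal.ofReal (g s))
      + ∫⁻ s in Ico 0 ((1-u)*ta+u*tb), ENNReal.ofReal (-(g s)) := by
  rcases le_total ta tb with h | h
  · exact key g hg h0a h hu0 hu1
  · have h' := key g hg h0b h (by linarith : (0:ℝ) ≤ 1 - u) (by linarith : (1:ℝ) - u ≤ 1)
    rw [show (1:ℝ) - (1-u) = u by ring] at h'
    rw [show u*tb + (1-u)*ta = (1-u)*ta + u*tb by ring] at h'
    refine le_trans (le_of_eq (by ring)) (h'.trans (le_of_eq (by ring)))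

lemma setEq {r : ℝ≥0∞} (hr : r ≠ ⊤) :
    {s : ℝ | 0 ≤ s ∧ ENNReal.ofReal s < r} = Ico 0 r.toReal := by
  ext s
  simp only [mem_setOf_eq, mem_Ico]
  exact and_congr_right fun hs => ENNReal.ofReal_lt_iff_lt_toReal hs hr

variable {X : Type*} [MeasurableSpace X]

/-- jointly measurable version of `ofReal ∘ ξ x` on `[0,∞)` (positive part). -/
noncomputable def Gp (ξ : X → ℝ → ℝ) (x : X) (s : ℝ) : ℝ≥0∞ :=
  ⨅ q : ℚ, if s < (q : ℝ) then ENNReal.ofReal (ξ x (q : ℝ)) else ⊤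

/-- jointly measurable version of `ofReal ∘ (-ξ x)` on `[0,∞)` (negative part). -/
noncomputable def Gn (ξ : X → ℝ → ℝ) (x : X) (s : ℝ) : ℝ≥0∞ :=
  ⨆ q : ℚ, if s < (q : ℝ) then ENNReal.ofReal (-(ξ x (q : ℝ))) else 0

lemma measurable_Gp (ξ : X → ℝ → ℝ) (hmeas : ∀ t : ℝ, Measurable fun x => ξ x t) :
    Measurable (fun p : X × ℝ => Gp ξ p.1 p.2) := by
  apply Measurable.iInf
  intro q
  exact Measurable.ite (measurable_snd measurableSet_Iio)
    (((hmeas (q : ℝ)).comp measurable_fst).ennreal_ofReal) measurable_const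

lemma measurable_Gn (ξ : X → ℝ → ℝ) (hmeas : ∀ t : ℝ, Measurable fun x => ξ x t) :
    Measurable (fun p : X × ℝ => Gn ξ p.1 p.2) := by
  apply Measurable.iSup
  intro q
  exact Measurable.ite (measurable_snd measurableSet_Iio)
    (((hmeas (q : ℝ)).comp measurable_fst).neg.ennreal_ofReal) measurable_const

/-- existence of rationals realizing right-continuity bounds -/
lemma exists_rat (ξ : X → ℝ → ℝ) (hmono : ∀ x, MonotoneOn (ξ x) (Ici 0))
    (hrc : ∀ x, ∀ t ∈ Ici (0:ℝ), ContinuousWithinAt (ξ x) (Ici t) t)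
    (x : X) {s : ℝ} (hs : 0 ≤ s) {ε : ℝ} (hε : 0 < ε) :
    ∃ q : ℚ, s < (q:ℝ) ∧ ξ x (q:ℝ) < ξ x s + ε := by
  have h := hrc x s hs
  have hne : {t : ℝ | ξ x t < ξ x s + ε} ∈ nhdsWithin s (Ici s) := by
    exact h (Iio_mem_nhds (by linarith))
  rw [mem_nhdsGE_iff_exists_Ico_subset] at hne
  obtain ⟨r, hr, hsub⟩ := hne
  obtain ⟨q, hq1, hq2⟩ := exists_rat_btwn (mem_Ioi.1 hr)
  exact ⟨q, hq1, hsub ⟨le_of_lt hq1, hq2⟩⟩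

lemma Gp_eq (ξ : X → ℝ → ℝ) (hmono : ∀ x, MonotoneOn (ξ x) (Ici 0))
    (hrc : ∀ x, ∀ t ∈ Ici (0:ℝ), ContinuousWithinAt (ξ x) (Ici t) t)
    (x : X) {s : ℝ} (hs : 0 ≤ s) : Gp ξ x s = ENNReal.ofReal (ξ x s) := by
  apply le_antisymm
  · apply ENNReal.le_of_forall_pos_le_add
    intro ε hε _
    obtain ⟨q, hq1, hq2⟩ := exists_rat ξ hmono hrc x hs (ε := ε) (by exact_mod_cast hε)
    calc Gp ξ x s ≤ if s < (q:ℝ) then ENNReal.ofReal (ξ x (q:ℝ)) else ⊤ := iInf_le _ q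
      _ = ENNReal.ofReal (ξ x (q:ℝ)) := if_pos hq1
      _ ≤ ENNReal.ofReal (ξ x s + ε) := ENNReal.ofReal_le_ofReal (le_of_lt hq2)
      _ ≤ ENNReal.ofReal (ξ x s) + ENNReal.ofReal (ε:ℝ) := ENNReal.ofReal_add_le
      _ = ENNReal.ofReal (ξ x s) + ε := by rw [ENNReal.ofReal_coe_nnreal]
  · apply le_iInf
    intro q
    by_cases hq : s < (q:ℝ)
    · rw [if_pos hq]
      exact ENNReal.ofReal_le_ofReal (hmono x hs (le_trans hs (le_of_lt hq)) (le_of_lt hq))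
    · rw [if_neg hq]; exact le_top

lemma Gn_eq (ξ : X → ℝ → ℝ) (hmono : ∀ x, MonotoneOn (ξ x) (Ici 0))
    (hrc : ∀ x, ∀ t ∈ Ici (0:ℝ), ContinuousWithinAt (ξ x) (Ici t) t)
    (x : X) {s : ℝ} (hs : 0 ≤ s) : Gn ξ x s = ENNReal.ofReal (-(ξ x s)) := by
  apply le_antisymm
  · apply iSup_le
    intro q
    by_cases hq : s < (q:ℝ)
    · rw [if_pos hq]
      exact ENNReal.ofReal_le_ofReal
        (neg_le_neg (hmono x hs (le_trans hs (le_of_lt hq)) (le_of_lt hq)))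
    · rw [if_neg hq]; exact bot_le
  · apply ENNReal.le_of_forall_pos_le_add
    intro ε hε _
    obtain ⟨q, hq1, hq2⟩ := exists_rat ξ hmono hrc x hs (ε := ε) (by exact_mod_cast hε)
    calc ENNReal.ofReal (-(ξ x s)) ≤ ENNReal.ofReal (-(ξ x (q:ℝ)) + ε) :=
          ENNReal.ofReal_le_ofReal (by linarith)
      _ ≤ ENNReal.ofReal (-(ξ x (q:ℝ))) + ENNReal.ofReal (ε:ℝ) := ENNReal.ofReal_add_le
      _ = ENNReal.ofReal (-(ξ x (q:ℝ))) + ε := by rw [ENNReal.ofReal_coe_nnreal]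
      _ ≤ Gn ξ x s + ε := by
          apply add_le_add_left
          calc ENNReal.ofReal (-(ξ x (q:ℝ)))
              = if s < (q:ℝ) then ENNReal.ofReal (-(ξ x (q:ℝ))) else 0 := (if_pos hq1).symm
            _ ≤ Gn ξ x s := le_iSup (fun q : ℚ =>
                if s < (q:ℝ) then ENNReal.ofReal (-(ξ x (q:ℝ))) else 0) q

/-- Measurability of `x ↦ ∫⁻_{[0,τ x)} ξ₊(x,s) ds`. -/
lemma measP (ξ : X → ℝ → ℝ) (hmeas : ∀ t : ℝ, Measurable fun x => ξ x t)
    (hmono : ∀ x, MonotoneOn (ξ x) (Ici 0))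
    (hrc : ∀ x, ∀ t ∈ Ici (0:ℝ), ContinuousWithinAt (ξ x) (Ici t) t)
    (τ : X → ℝ≥0∞) (hτ : Measurable τ) :
    Measurable fun x => ∫⁻ s in {s : ℝ | 0 ≤ s ∧ ENNReal.ofReal s < τ x},
      ENNReal.ofReal (ξ x s) := by
  have hSmeas : ∀ x, MeasurableSet {s : ℝ | 0 ≤ s ∧ ENNReal.ofReal s < τ x} := by
    intro x
    exact (measurableSet_Ici.preimage measurable_id).inter
      ((measurableSet_Iio (a := τ x)).preimage ENNReal.measurable_ofReal)
  have heq : ∀ x, (∫⁻ s in {s : ℝ | 0 ≤ s ∧ ENNReal.ofReal s < τ x},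
      ENNReal.ofReal (ξ x s)) = ∫⁻ s, ({s : ℝ | 0 ≤ s ∧ ENNReal.ofReal s < τ x}.indicator
        (fun s => Gp ξ x s)) s := by
    intro x
    rw [lintegral_indicator (hSmeas x)]
    apply setLIntegral_congr_fun (hSmeas x)
    exact fun s hs => (Gp_eq ξ hmono hrc x hs.1).symm
  simp_rw [heq]
  apply Measurable.lintegral_prod_right (f := fun x s =>
    ({s : ℝ | 0 ≤ s ∧ ENNReal.ofReal s < τ x}.indicator (fun s => Gp ξ x s)) s)
  have : (Function.uncurry fun x s =>
      ({s : ℝ | 0 ≤ s ∧ ENNReal.ofReal s < τ x}.indicator (fun s => Gp ξ x s)) s) =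
      ({p : X × ℝ | 0 ≤ p.2 ∧ ENNReal.ofReal p.2 < τ p.1}.indicator
        (fun p => Gp ξ p.1 p.2)) := by
    ext ⟨x, s⟩
    simp only [Function.uncurry, Set.indicator, mem_setOf_eq]
  rw [this]
  apply Measurable.indicator (measurable_Gp ξ hmeas)
  refine ((measurableSet_Ici.preimage measurable_snd)).inter ?_
  exact measurableSet_lt
    (f := fun p : X × ℝ => ENNReal.ofReal p.2) (g := fun p : X × ℝ => τ p.1)
    (ENNReal.measurable_ofReal.comp measurable_snd) (hτ.comp measurable_fst)

lemma measN (ξ : X → ℝ → ℝ) (hmeas : ∀ t : ℝ, Measurable fun x => ξ x t)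
    (hmono : ∀ x, MonotoneOn (ξ x) (Ici 0))
    (hrc : ∀ x, ∀ t ∈ Ici (0:ℝ), ContinuousWithinAt (ξ x) (Ici t) t)
    (τ : X → ℝ≥0∞) (hτ : Measurable τ) :
    Measurable fun x => ∫⁻ s in {s : ℝ | 0 ≤ s ∧ ENNReal.ofReal s < τ x},
      ENNReal.ofReal (-(ξ x s)) := by
  have hSmeas : ∀ x, MeasurableSet {s : ℝ | 0 ≤ s ∧ ENNReal.ofReal s < τ x} := by
    intro x
    exact (measurableSet_Ici.preimage measurable_id).inter
      ((measurableSet_Iio (a := τ x)).preimage ENNReal.measurable_ofReal)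
  have heq : ∀ x, (∫⁻ s in {s : ℝ | 0 ≤ s ∧ ENNReal.ofReal s < τ x},
      ENNReal.ofReal (-(ξ x s))) = ∫⁻ s, ({s : ℝ | 0 ≤ s ∧ ENNReal.ofReal s < τ x}.indicator
        (fun s => Gn ξ x s)) s := by
    intro x
    rw [lintegral_indicator (hSmeas x)]
    apply setLIntegral_congr_fun (hSmeas x)
    exact fun s hs => (Gn_eq ξ hmono hrc x hs.1).symm
  simp_rw [heq]
  apply Measurable.lintegral_prod_right (f := fun x s =>
    ({s : ℝ | 0 ≤ s ∧ ENNReal.ofReal s < τ x}.indicator (fun s => Gn ξ x s)) s)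
  have : (Function.uncurry fun x s =>
      ({s : ℝ | 0 ≤ s ∧ ENNReal.ofReal s < τ x}.indicator (fun s => Gn ξ x s)) s) =
      ({p : X × ℝ | 0 ≤ p.2 ∧ ENNReal.ofReal p.2 < τ p.1}.indicator
        (fun p => Gn ξ p.1 p.2)) := by
    ext ⟨x, s⟩
    simp only [Function.uncurry, Set.indicator, mem_setOf_eq]
  rw [this]
  apply Measurable.indicator (measurable_Gn ξ hmeas)
  refine ((measurableSet_Ici.preimage measurable_snd)).inter ?_
  exact measurableSet_lt
    (f := fun p : X × ℝ => ENNReal.ofReal p.2) (g := fun p : X × ℝ => τ p.1)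
    (ENNReal.measurable_ofReal.comp measurable_snd) (hτ.comp measurable_fst)

lemma enn_coe_fin (x : ℝ≥0∞) (hx : x ≠ ⊤) : (x : EReal) = ((x.toReal : ℝ) : EReal) := by
  induction x with
  | top => exact absurd rfl hx
  | coe p => rw [EReal.coe_nnreal_eq_coe_real, ENNReal.coe_toReal]

lemma ereal_sub_le_sub {A A' B B' : ℝ≥0∞} (hB : B ≠ ⊤) (hB' : B' ≠ ⊤)
    (h : A + B' ≤ A' + B) : (A : EReal) - B ≤ (A' : EReal) - B' := by
  by_cases hA' : A' = ⊤
  · rw [hA', EReal.coe_ennreal_top, enn_coe_fin B' hB']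
    exact le_of_le_of_eq le_top (EReal.top_sub_coe _).symm
  · have hA : A ≠ ⊤ := by
      intro hA
      rw [hA, top_add] at h
      exact (ENNReal.add_lt_top.2 ⟨(lt_top_iff_ne_top.2 hA'), (lt_top_iff_ne_top.2 hB)⟩).ne (top_le_iff.1 h)
    rw [enn_coe_fin A hA, enn_coe_fin B hB, enn_coe_fin A' hA', enn_coe_fin B' hB',
      ← EReal.coe_sub, ← EReal.coe_sub, EReal.coe_le_coe_iff]
    have := ENNReal.toReal_mono (by
        exact ENNReal.add_ne_top.2 ⟨hA', hB⟩) h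
    rw [ENNReal.toReal_add hA hB', ENNReal.toReal_add hA' hB] at this
    linarith

lemma ereal_top_sub {B : ℝ≥0∞} (hB : B ≠ ⊤) : (⊤ : EReal) - (B : EReal) = ⊤ := by
  rw [enn_coe_fin B hB]
  exact EReal.top_sub_coe _

lemma ereal_smul_sub {c : ℝ} (hc : 0 ≤ c) (A B : ℝ≥0∞) (hB : B ≠ ⊤) :
    ((c : EReal)) * ((A : EReal) - (B : EReal)) =
      ((ENNReal.ofReal c * A : ℝ≥0∞) : EReal) - ((ENNReal.ofReal c * B : ℝ≥0∞) : EReal) := by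
  by_cases hA : A = ⊤
  · rcases eq_or_lt_of_le hc with hc0 | hc0
    · rw [hA, ← hc0]
      simp
    · rw [hA, EReal.coe_ennreal_top, ereal_top_sub hB, EReal.coe_mul_top_of_pos hc0,
        ENNReal.mul_top (by simpa using (ENNReal.ofReal_pos.2 hc0).ne'),
        EReal.coe_ennreal_top, ereal_top_sub (by
          exact ENNReal.mul_ne_top ENNReal.ofReal_ne_top hB)]
  · rw [enn_coe_fin A hA, enn_coe_fin B hB,
      enn_coe_fin _ (ENNReal.mul_ne_top ENNReal.ofReal_ne_top hA),
      enn_coe_fin _ (ENNReal.mul_ne_top ENNReal.ofReal_ne_top hB),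
      ← EReal.coe_sub, ← EReal.coe_sub, ← EReal.coe_mul, EReal.coe_eq_coe_iff,
      ENNReal.toReal_mul, ENNReal.toReal_mul, ENNReal.toReal_ofReal hc]
    ring

lemma ereal_add_sub (A A' B B' : ℝ≥0∞) (hB : B ≠ ⊤) (hB' : B' ≠ ⊤) :
    ((A : EReal) - B) + ((A' : EReal) - B') =
      ((A + A' : ℝ≥0∞) : EReal) - ((B + B' : ℝ≥0∞) : EReal) := by
  have hBB' : B + B' ≠ ⊤ := ENNReal.add_ne_top.2 ⟨hB, hB'⟩
  by_cases hA : A = ⊤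
  · rw [hA, EReal.coe_ennreal_top, ereal_top_sub hB, top_add,
      EReal.coe_ennreal_top, ereal_top_sub hBB']
    apply EReal.top_add_of_ne_bot
    intro hbot
    by_cases hA' : A' = ⊤
    · rw [hA', EReal.coe_ennreal_top, ereal_top_sub hB'] at hbot
      exact (by simp : (⊤ : EReal) ≠ ⊥) hbot
    · rw [enn_coe_fin A' hA', enn_coe_fin B' hB', ← EReal.coe_sub] at hbot
      exact (EReal.coe_ne_bot _) hbot
  · by_cases hA' : A' = ⊤
    · rw [hA', EReal.coe_ennreal_top, ereal_top_sub hB', add_top,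
        EReal.coe_ennreal_top, ereal_top_sub hBB']
      apply EReal.add_top_of_ne_bot
      rw [enn_coe_fin A hA, enn_coe_fin B hB, ← EReal.coe_sub]
      exact EReal.coe_ne_bot _
    · rw [enn_coe_fin A hA, enn_coe_fin B hB, enn_coe_fin A' hA', enn_coe_fin B' hB',
        enn_coe_fin _ (ENNReal.add_ne_top.2 ⟨hA, hA'⟩), enn_coe_fin _ hBB',
        ENNReal.toReal_add hA hA', ENNReal.toReal_add hB hB']
      rw [← EReal.coe_sub, ← EReal.coe_sub, ← EReal.coe_sub, ← EReal.coe_add,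
        EReal.coe_eq_coe_iff]
      ring

/-- The main EReal algebra step. -/
lemma alg {Aa Ab Ac Ba Bb Bc : ℝ≥0∞} (hBa : Ba ≠ ⊤) (hBb : Bb ≠ ⊤) (hBc : Bc ≠ ⊤)
    {u : ℝ} (hu0 : 0 ≤ u) (hu1 : u ≤ 1)
    (h : Ac + ENNReal.ofReal (1-u) * Ba + ENNReal.ofReal u * Bb ≤
      ENNReal.ofReal (1-u) * Aa + ENNReal.ofReal u * Ab + Bc) :
    (Ac : EReal) - Bc ≤ ((1-u : ℝ) : EReal) * ((Aa : EReal) - Ba)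
      + ((u : ℝ) : EReal) * ((Ab : EReal) - Bb) := by
  rw [ereal_smul_sub (by linarith : (0:ℝ) ≤ 1 - u) Aa Ba hBa,
    ereal_smul_sub hu0 Ab Bb hBb,
    ereal_add_sub _ _ _ _ (ENNReal.mul_ne_top ENNReal.ofReal_ne_top hBa)
      (ENNReal.mul_ne_top ENNReal.ofReal_ne_top hBb)]
  apply ereal_sub_le_sub hBc (ENNReal.add_ne_top.2
    ⟨ENNReal.mul_ne_top ENNReal.ofReal_ne_top hBa,
     ENNReal.mul_ne_top ENNReal.ofReal_ne_top hBb⟩)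
  calc Ac + (ENNReal.ofReal (1-u) * Ba + ENNReal.ofReal u * Bb)
      = Ac + ENNReal.ofReal (1-u) * Ba + ENNReal.ofReal u * Bb := by ring
    _ ≤ ENNReal.ofReal (1-u) * Aa + ENNReal.ofReal u * Ab + Bc := h

end Stmt8Aux

open Stmt8Aux in
/-- Proposition 1 (convexity part): when `μτ_λ < ∞` for all `λ`, the value
function `f(α) = ν ∫_0^{τ(α)} ξ(s) ds` of the constrained problem is convex on
`[0, μT] ∩ [0, ∞)`. -/
theorem stmt8 {X : Type*} [MeasurableSpace X] (μ ν : Measure X) [SigmaFinite μ]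
    [SigmaFinite ν]
    (Y : X → ℝ) (hYmeas : Measurable Y) (hYnn : ∀ x, 0 ≤ Y x)
    (hν : ν = μ.withDensity fun x => ENNReal.ofReal (Y x))
    (ξ : X → ℝ → ℝ)
    (hmeas : ∀ t : ℝ, Measurable fun x => ξ x t)
    (hmono : ∀ x, MonotoneOn (ξ x) (Set.Ici (0 : ℝ)))
    (hrc : ∀ x, ∀ t ∈ Set.Ici (0 : ℝ), ContinuousWithinAt (ξ x) (Set.Ici t) t)
    (T : X → ℝ≥0∞) (hT : Measurable T)
    (hint : (∫⁻ x, (∫⁻ s in {s : ℝ | 0 ≤ s ∧ ENNReal.ofReal s ≤ T x},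
        ENNReal.ofReal (-(ξ x s))) ∂ν) < ⊤)
    -- `μτ_λ < ∞` for every `λ ∈ ℝ`:
    (hfin : ∀ lam : ℝ, (∫⁻ x,
        min (sInf (ENNReal.ofReal '' {t : ℝ | 0 ≤ t ∧ lam ≤ Y x * ξ x t})) (T x) ∂μ) < ⊤)
    -- `τopt a` is the optimal solution of the problem with constraint `μτ = a`:
    (τopt : ℝ → X → ℝ≥0∞)
    (hfeas : ∀ a : ℝ, 0 ≤ a → ENNReal.ofReal a ≤ (∫⁻ x, T x ∂μ) →
      Measurable (τopt a) ∧ (∀ᵐ x ∂μ, τopt a x ≤ T x) ∧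
      (∫⁻ x, τopt a x ∂μ) = ENNReal.ofReal a)
    (hopt : ∀ a : ℝ, 0 ≤ a → ENNReal.ofReal a ≤ (∫⁻ x, T x ∂μ) →
      ∀ τ : X → ℝ≥0∞, Measurable τ → (∀ᵐ x ∂μ, τ x ≤ T x) →
        (∫⁻ x, τ x ∂μ) = ENNReal.ofReal a →
        clearingObjective ν ξ (τopt a) ≤ clearingObjective ν ξ τ) :
    -- convexity of `f(a) = ν ∫_0^{τopt a} ξ ds` on `[0, μT] ∩ [0, ∞)`:
    ∀ a b : ℝ, 0 ≤ a → ENNReal.ofReal a ≤ (∫⁻ x, T x ∂μ) →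
      0 ≤ b → ENNReal.ofReal b ≤ (∫⁻ x, T x ∂μ) →
      ∀ u : ℝ, u ∈ Set.Icc (0 : ℝ) 1 →
        clearingObjective ν ξ (τopt ((1 - u) * a + u * b)) ≤
          ((1 - u : ℝ) : EReal) * clearingObjective ν ξ (τopt a) +
            ((u : ℝ) : EReal) * clearingObjective ν ξ (τopt b) := by
  intro a b ha haT hb hbT u hu
  obtain ⟨hu0, hu1⟩ := hu
  have hv0 : (0:ℝ) ≤ 1 - u := by linarith
  obtain ⟨hma, haTae, hia⟩ := hfeas a ha haT
  obtain ⟨hmb, hbTae, hib⟩ := hfeas b hb hbT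
  set v : ℝ≥0∞ := ENNReal.ofReal (1-u) with hvdef
  set w : ℝ≥0∞ := ENNReal.ofReal u with hwdef
  have hvw : v + w = 1 := by
    rw [hvdef, hwdef, ← ENNReal.ofReal_add hv0 hu0]; norm_num
  set τc : X → ℝ≥0∞ := fun x => v * τopt a x + w * τopt b x with hτcdef
  have hmc : Measurable τc := (measurable_const.mul hma).add (measurable_const.mul hmb)
  have hcTae : ∀ᵐ x ∂μ, τc x ≤ T x := by
    filter_upwards [haTae, hbTae] with x h1 h2
    calc τc x ≤ v * T x + w * T x :=
          add_le_add (mul_le_mul_right h1 v) (mul_le_mul_right h2 w)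
      _ = (v + w) * T x := (add_mul v w (T x)).symm
      _ = T x := by rw [hvw, one_mul]
  have hic : (∫⁻ x, τc x ∂μ) = ENNReal.ofReal ((1-u) * a + u * b) := by
    rw [show (∫⁻ x, τc x ∂μ) = ∫⁻ x, (v * τopt a x + w * τopt b x) ∂μ from rfl,
      lintegral_add_left (f := fun x => v * τopt a x) (measurable_const.mul hma),
      lintegral_const_mul v hma, lintegral_const_mul w hmb, hia, hib,
      hvdef, hwdef, ← ENNReal.ofReal_mul hv0, ← ENNReal.ofReal_mul hu0,
      ← ENNReal.ofReal_add (mul_nonneg hv0 ha) (mul_nonneg hu0 hb)]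
  have hc0 : 0 ≤ (1-u) * a + u * b := add_nonneg (mul_nonneg hv0 ha) (mul_nonneg hu0 hb)
  have hcT : ENNReal.ofReal ((1-u) * a + u * b) ≤ ∫⁻ x, T x ∂μ := by
    rw [← hic]; exact lintegral_mono_ae hcTae
  have hstep := hopt _ hc0 hcT τc hmc hcTae hic
  refine le_trans hstep ?_
  -- absolute continuity
  have habs : ν ≪ μ := by rw [hν]; exact withDensity_absolutelyContinuous μ _
  have toν : ∀ {p : X → Prop}, (∀ᵐ x ∂μ, p x) → (∀ᵐ x ∂ν, p x) := fun h => habs.ae_le h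
  -- finiteness of negative parts
  have hNfin : ∀ (τ : X → ℝ≥0∞), (∀ᵐ x ∂μ, τ x ≤ T x) →
      (∫⁻ x, (∫⁻ s in {s : ℝ | 0 ≤ s ∧ ENNReal.ofReal s < τ x},
        ENNReal.ofReal (-(ξ x s))) ∂ν) ≠ ⊤ := by
    intro τ hτT
    refine ne_top_of_le_ne_top hint.ne ?_
    apply lintegral_mono_ae
    filter_upwards [toν hτT] with x hx
    apply lintegral_mono_set
    intro s hs
    exact ⟨hs.1, le_trans (le_of_lt hs.2) hx⟩
  -- a.e. finiteness of the optimal times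
  have hfa : ∀ᵐ x ∂μ, τopt a x < ⊤ :=
    ae_lt_top hma (by rw [hia]; exact ENNReal.ofReal_ne_top)
  have hfb : ∀ᵐ x ∂μ, τopt b x < ⊤ :=
    ae_lt_top hmb (by rw [hib]; exact ENNReal.ofReal_ne_top)
  -- pointwise inequality
  have hpt : ∀ᵐ x ∂ν,
      (∫⁻ s in {s : ℝ | 0 ≤ s ∧ ENNReal.ofReal s < τc x}, ENNReal.ofReal (ξ x s))
        + v * (∫⁻ s in {s : ℝ | 0 ≤ s ∧ ENNReal.ofReal s < τopt a x},
            ENNReal.ofReal (-(ξ x s)))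
        + w * (∫⁻ s in {s : ℝ | 0 ≤ s ∧ ENNReal.ofReal s < τopt b x},
            ENNReal.ofReal (-(ξ x s)))
      ≤ v * (∫⁻ s in {s : ℝ | 0 ≤ s ∧ ENNReal.ofReal s < τopt a x},
            ENNReal.ofReal (ξ x s))
        + w * (∫⁻ s in {s : ℝ | 0 ≤ s ∧ ENNReal.ofReal s < τopt b x},
            ENNReal.ofReal (ξ x s))
        + ∫⁻ s in {s : ℝ | 0 ≤ s ∧ ENNReal.ofReal s < τc x},
            ENNReal.ofReal (-(ξ x s)) := by
    filter_upwards [toν hfa, toν hfb] with x h1 h2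
    set ta : ℝ := (τopt a x).toReal with htadef
    set tb : ℝ := (τopt b x).toReal with htbdef
    have hta0 : 0 ≤ ta := ENNReal.toReal_nonneg
    have htb0 : 0 ≤ tb := ENNReal.toReal_nonneg
    have hτcx : τc x = ENNReal.ofReal ((1-u) * ta + u * tb) := by
      rw [show τc x = v * τopt a x + w * τopt b x from rfl,
        ← ENNReal.ofReal_toReal h1.ne, ← ENNReal.ofReal_toReal h2.ne,
        hvdef, hwdef, ← htadef, ← htbdef,
        ← ENNReal.ofReal_mul hv0, ← ENNReal.ofReal_mul hu0,
        ← ENNReal.ofReal_add (mul_nonneg hv0 hta0) (mul_nonneg hu0 htb0)]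
    have ea : {s : ℝ | 0 ≤ s ∧ ENNReal.ofReal s < τopt a x} = Ico 0 ta :=
      setEq h1.ne
    have eb : {s : ℝ | 0 ≤ s ∧ ENNReal.ofReal s < τopt b x} = Ico 0 tb :=
      setEq h2.ne
    have ec : {s : ℝ | 0 ≤ s ∧ ENNReal.ofReal s < τc x} = Ico 0 ((1-u) * ta + u * tb) := by
      rw [hτcx, setEq ENNReal.ofReal_ne_top,
        ENNReal.toReal_ofReal (add_nonneg (mul_nonneg hv0 hta0) (mul_nonneg hu0 htb0))]
    rw [ea, eb, ec, hvdef, hwdef]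
    exact keyU (ξ x) (hmono x) hta0 htb0 hu0 hu1
  -- integrate
  have mPa := measP ξ hmeas hmono hrc (τopt a) hma
  have mPb := measP ξ hmeas hmono hrc (τopt b) hmb
  have mPc := measP ξ hmeas hmono hrc τc hmc
  have mNa := measN ξ hmeas hmono hrc (τopt a) hma
  have mNb := measN ξ hmeas hmono hrc (τopt b) hmb
  have mNc := measN ξ hmeas hmono hrc τc hmc
  have hnum :
      (∫⁻ x, (∫⁻ s in {s : ℝ | 0 ≤ s ∧ ENNReal.ofReal s < τc x},
          ENNReal.ofReal (ξ x s)) ∂ν)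
        + v * (∫⁻ x, (∫⁻ s in {s : ℝ | 0 ≤ s ∧ ENNReal.ofReal s < τopt a x},
            ENNReal.ofReal (-(ξ x s))) ∂ν)
        + w * (∫⁻ x, (∫⁻ s in {s : ℝ | 0 ≤ s ∧ ENNReal.ofReal s < τopt b x},
            ENNReal.ofReal (-(ξ x s))) ∂ν)
      ≤ v * (∫⁻ x, (∫⁻ s in {s : ℝ | 0 ≤ s ∧ ENNReal.ofReal s < τopt a x},
            ENNReal.ofReal (ξ x s)) ∂ν)
        + w * (∫⁻ x, (∫⁻ s in {s : ℝ | 0 ≤ s ∧ ENNReal.ofReal s < τopt b x},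
            ENNReal.ofReal (ξ x s)) ∂ν)
        + ∫⁻ x, (∫⁻ s in {s : ℝ | 0 ≤ s ∧ ENNReal.ofReal s < τc x},
            ENNReal.ofReal (-(ξ x s))) ∂ν := by
    have eL : (∫⁻ x, ((∫⁻ s in {s : ℝ | 0 ≤ s ∧ ENNReal.ofReal s < τc x},
          ENNReal.ofReal (ξ x s))
        + v * (∫⁻ s in {s : ℝ | 0 ≤ s ∧ ENNReal.ofReal s < τopt a x},
            ENNReal.ofReal (-(ξ x s)))
        + w * (∫⁻ s in {s : ℝ | 0 ≤ s ∧ ENNReal.ofReal s < τopt b x},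
            ENNReal.ofReal (-(ξ x s)))) ∂ν) =
        (∫⁻ x, (∫⁻ s in {s : ℝ | 0 ≤ s ∧ ENNReal.ofReal s < τc x},
          ENNReal.ofReal (ξ x s)) ∂ν)
        + v * (∫⁻ x, (∫⁻ s in {s : ℝ | 0 ≤ s ∧ ENNReal.ofReal s < τopt a x},
            ENNReal.ofReal (-(ξ x s))) ∂ν)
        + w * (∫⁻ x, (∫⁻ s in {s : ℝ | 0 ≤ s ∧ ENNReal.ofReal s < τopt b x},
            ENNReal.ofReal (-(ξ x s))) ∂ν) := by
      rw [lintegral_add_left (f := fun x => (∫⁻ s in {s : ℝ | 0 ≤ s ∧ ENNReal.ofReal s < τc x},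
            ENNReal.ofReal (ξ x s))
          + v * (∫⁻ s in {s : ℝ | 0 ≤ s ∧ ENNReal.ofReal s < τopt a x},
              ENNReal.ofReal (-(ξ x s)))) (mPc.add (mNa.const_mul v)),
        lintegral_add_left mPc, lintegral_const_mul v mNa, lintegral_const_mul w mNb]
    have eR : (∫⁻ x, (v * (∫⁻ s in {s : ℝ | 0 ≤ s ∧ ENNReal.ofReal s < τopt a x},
            ENNReal.ofReal (ξ x s))
        + w * (∫⁻ s in {s : ℝ | 0 ≤ s ∧ ENNReal.ofReal s < τopt b x},
            ENNReal.ofReal (ξ x s))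
        + ∫⁻ s in {s : ℝ | 0 ≤ s ∧ ENNReal.ofReal s < τc x},
            ENNReal.ofReal (-(ξ x s))) ∂ν) =
        v * (∫⁻ x, (∫⁻ s in {s : ℝ | 0 ≤ s ∧ ENNReal.ofReal s < τopt a x},
            ENNReal.ofReal (ξ x s)) ∂ν)
        + w * (∫⁻ x, (∫⁻ s in {s : ℝ | 0 ≤ s ∧ ENNReal.ofReal s < τopt b x},
            ENNReal.ofReal (ξ x s)) ∂ν)
        + ∫⁻ x, (∫⁻ s in {s : ℝ | 0 ≤ s ∧ ENNReal.ofReal s < τc x},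
            ENNReal.ofReal (-(ξ x s))) ∂ν := by
      rw [lintegral_add_left (f := fun x => v * (∫⁻ s in {s : ℝ | 0 ≤ s ∧ ENNReal.ofReal s < τopt a x},
              ENNReal.ofReal (ξ x s))
          + w * (∫⁻ s in {s : ℝ | 0 ≤ s ∧ ENNReal.ofReal s < τopt b x},
              ENNReal.ofReal (ξ x s))) ((mPa.const_mul v).add (mPb.const_mul w)),
        lintegral_add_left (mPa.const_mul v),
        lintegral_const_mul v mPa, lintegral_const_mul w mPb]
    rw [← eL, ← eR]
    exact lintegral_mono_ae hpt
  exact alg (hNfin _ haTae) (hNfin _ hbTae) (hNfin _ hcTae) hu0 hu1 hnum
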